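/- Let r ≥ 1 and s ≥ 0, and let G be a (K_r ⊟ K_r, sP_1 + P_2)-free graph. Then for every X ⊆ V(G), cutmim_G(X, V(G)∖X) < R(R(r, s+1), s+1). In particular, mimw(G) < R(R(r, s+1), s+1). -/

import Mathlib

open SimpleGraph

/-- `M` is an induced matching in the bipartite graph `G[X,Y]`: every pair in `M` is an
edge of `G` with first endpoint in `X` and second endpoint in `Y`, the pairs are pairwise
vertex-disjoint, and no edge of `G` between `X` and `Y` joins vertices incident to
distinct pairs of `M`. -/
def IsInducedCutMatching {V : Type*} (G : SimpleGraph V) (X Y : Set V)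
    (M : Finset (V × V)) : Prop :=
  (∀ p ∈ M, p.1 ∈ X ∧ p.2 ∈ Y ∧ G.Adj p.1 p.2) ∧
  ∀ p ∈ M, ∀ q ∈ M, p ≠ q →
    p.1 ≠ q.1 ∧ p.2 ≠ q.2 ∧ p.1 ≠ q.2 ∧ p.2 ≠ q.1 ∧
    ¬ G.Adj p.1 q.2 ∧ ¬ G.Adj q.1 p.2

/-- `cutmim G X Y` is the maximum size of an induced matching in `G[X,Y]`. -/
noncomputable def cutmim {V : Type*} (G : SimpleGraph V) (X Y : Set V) : ℕ :=
  sSup {n : ℕ | ∃ M : Finset (V × V), IsInducedCutMatching G X Y M ∧ M.card = n}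

/-- A branch decomposition of a graph `G`: a finite tree `T` of maximum degree at most 3
together with a bijection `δ` from the vertices of `G` to the leaves of `T`. -/
structure BranchDecomp {V : Type*} (G : SimpleGraph V) where
  L : Type
  T : SimpleGraph L
  finite : Finite L
  connected : T.Connected
  acyclic : T.IsAcyclic
  subcubic : ∀ x : L, (T.neighborSet x).ncard ≤ 3
  δ : V → L
  δ_inj : Function.Injective δ
  δ_leaf : ∀ v : V, (T.neighborSet (δ v)).ncard = 1
  δ_surj : ∀ x : L, (T.neighborSet x).ncard = 1 → ∃ v : V, δ v = x

/-- The side of the cut of `V(G)` induced by the tree edge `ab`: the set of vertices of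
`G` mapped by `δ` into the component of `T - ab` containing `a`. -/
def BranchDecomp.side {V : Type*} {G : SimpleGraph V} (B : BranchDecomp G)
    (a b : B.L) : Set V :=
  {v : V | (B.T.deleteEdges {s(a, b)}).Reachable (B.δ v) a}

/-- The mim-width of a branch decomposition: the maximum over tree edges `ab` of
`cutmim G (A_e, V(G) \ A_e)`. -/
noncomputable def BranchDecomp.width {V : Type*} {G : SimpleGraph V}
    (B : BranchDecomp G) : ℕ :=
  sSup {n : ℕ | ∃ a b : B.L, B.T.Adj a b ∧ n = cutmim G (B.side a b) (B.side a b)ᶜ}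

/-- The mim-width of a graph: the minimum width over all branch decompositions
(by convention `0` if no branch decomposition exists, e.g. for graphs with fewer
than two vertices). -/
noncomputable def mimw {V : Type*} (G : SimpleGraph V) : ℕ :=
  sInf {n : ℕ | ∃ B : BranchDecomp G, B.width = n}

/-- `G` is `H`-free: no induced subgraph of `G` is isomorphic to `H`. -/
def HFree {V W : Type*} (G : SimpleGraph V) (H : SimpleGraph W) : Prop :=
  ¬ ∃ S : Set V, Nonempty ((G.induce S) ≃g H)

/-- The disjoint union of two graphs. -/
def sumGraph {α β : Type*} (G : SimpleGraph α) (H : SimpleGraph β) :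
    SimpleGraph (α ⊕ β) :=
  SimpleGraph.fromRel (fun a b =>
    (∃ x y, a = Sum.inl x ∧ b = Sum.inl y ∧ G.Adj x y) ∨
    (∃ x y, a = Sum.inr x ∧ b = Sum.inr y ∧ H.Adj x y))

/-- `tP₂`: the disjoint union of `t` single edges. -/
def tP2graph (t : ℕ) : SimpleGraph (Fin t × Fin 2) :=
  SimpleGraph.fromRel (fun a b => a.1 = b.1)

/-- `sP₁ + P₂`: `s` isolated vertices together with a single edge. -/
def sP1P2graph (s : ℕ) : SimpleGraph (Fin s ⊕ Fin 2) :=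
  SimpleGraph.fromRel (fun a b => ∃ i j : Fin 2, a = Sum.inr i ∧ b = Sum.inr j)

/-- `K_r ⊟ K_r`: two disjoint copies of `K_r` joined by a perfect matching. -/
def KboxK (r : ℕ) : SimpleGraph (Fin r ⊕ Fin r) :=
  SimpleGraph.fromRel (fun a b =>
    (∃ i j, a = Sum.inl i ∧ b = Sum.inl j) ∨
    (∃ i j, a = Sum.inr i ∧ b = Sum.inr j) ∨
    (∃ i, a = Sum.inl i ∧ b = Sum.inr i))

/-- `K_r ⊟ rP₁`: a clique `a_1, …, a_r`, an independent set `b_1, …, b_r`, and the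
matching edges `a_i b_i`. -/
def KboxI (r : ℕ) : SimpleGraph (Fin r ⊕ Fin r) :=
  SimpleGraph.fromRel (fun a b =>
    (∃ i j, a = Sum.inl i ∧ b = Sum.inl j) ∨
    (∃ i, a = Sum.inl i ∧ b = Sum.inr i))

/-- `K_r ⊟ P₁`: `K_r` plus a pendant vertex attached to exactly one vertex of `K_r`. -/
def KboxP1 (r : ℕ) : SimpleGraph (Fin r ⊕ Unit) :=
  SimpleGraph.fromRel (fun a b =>
    (∃ i j : Fin r, a = Sum.inl i ∧ b = Sum.inl j) ∨
    (∃ i : Fin r, i.val = 0 ∧ a = Sum.inl i ∧ b = Sum.inr ()))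

/-- The claw `K_{1,3}`: vertex `0` adjacent to the three leaves `1`, `2`, `3`. -/
def clawGraph : SimpleGraph (Fin 4) :=
  SimpleGraph.fromRel (fun a _ => a = 0)

/-- The diamond: `K_4` minus the edge `{2,3}`. -/
def diamondGraph : SimpleGraph (Fin 4) :=
  SimpleGraph.fromRel (fun a b => ¬(a = 2 ∧ b = 3) ∧ ¬(a = 3 ∧ b = 2))

/-- The bowtie `⋈`: two triangles `{0,1,2}` and `{0,3,4}` sharing the vertex `0`. -/
def bowtieGraph : SimpleGraph (Fin 5) :=
  SimpleGraph.fromRel (fun a b => a = 0 ∨ (a = 1 ∧ b = 2) ∨ (a = 3 ∧ b = 4))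

/-- `P₁ + 2P₂`: the isolated vertex `0` and the two disjoint edges `12` and `34`. -/
def P1plus2P2graph : SimpleGraph (Fin 5) :=
  SimpleGraph.fromRel (fun a b => (a = 1 ∧ b = 2) ∨ (a = 3 ∧ b = 4))

/-- The subdivided claw `S_{1,1,5}`: centre `0` with leaves `1`, `2` at distance one and
the path `0-3-4-5-6-7`. -/
def S115graph : SimpleGraph (Fin 8) :=
  SimpleGraph.fromRel (fun a b =>
    (a = 0 ∧ b = 1) ∨ (a = 0 ∧ b = 2) ∨ (a = 0 ∧ b = 3) ∨
    (a = 3 ∧ b = 4) ∨ (a = 4 ∧ b = 5) ∨ (a = 5 ∧ b = 6) ∨ (a = 6 ∧ b = 7))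

/-- The Ramsey number `R(a,b)`: the least `N` such that every graph on at least `N`
vertices contains a clique of size `a` or an independent set of size `b`. -/
noncomputable def ramsey (a b : ℕ) : ℕ :=
  sInf {N : ℕ | ∀ M : ℕ, N ≤ M → ∀ G : SimpleGraph (Fin M),
    (∃ s : Finset (Fin M), G.IsNClique a s) ∨ (∃ s : Finset (Fin M), Gᶜ.IsNClique b s)}

/-- The `h × 2r` grid with the vertical edges prescribed by the wall construction:
the vertical edge between rows `i` and `i+1` of column `j` (all `0`-indexed) is kept
exactly when `i ≡ j (mod 2)`. -/
def wallPre (h r : ℕ) : SimpleGraph (Fin h × Fin (2 * r)) :=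
  SimpleGraph.fromRel (fun a b =>
    (a.1 = b.1 ∧ (a.2 : ℕ) + 1 = (b.2 : ℕ)) ∨
    (a.2 = b.2 ∧ (a.1 : ℕ) + 1 = (b.1 : ℕ) ∧ (a.1 : ℕ) % 2 = (a.2 : ℕ) % 2))

/-- The elementary `(h × r)`-wall: delete from `wallPre h r` all vertices of degree 1. -/
def elementaryWall (h r : ℕ) :
    SimpleGraph {v : Fin h × Fin (2 * r) // ((wallPre h r).neighborSet v).ncard ≠ 1} :=
  (wallPre h r).induce {v | ((wallPre h r).neighborSet v).ncard ≠ 1}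

/-- The graph obtained from `W` by simultaneously performing a clique implant on every
vertex of degree `3`: a degree-3 vertex `v` is replaced by the triangle of vertices
`(v, some u)` for `u` a neighbour of `v`, and `(v, some u)` inherits the edge of `v`
towards `u`; vertices of degree `≠ 3` are kept as `(v, none)`. -/
def cliqueImplantAll {V : Type*} (W : SimpleGraph V) :
    SimpleGraph {p : V × Option V //
      (p.2 = none ∧ (W.neighborSet p.1).ncard ≠ 3) ∨
      (∃ u, p.2 = some u ∧ (W.neighborSet p.1).ncard = 3 ∧ W.Adj p.1 u)} :=
  SimpleGraph.fromRel (fun a b =>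
    (a.1.1 = b.1.1 ∧ a.1.2 ≠ b.1.2) ∨
    (W.Adj a.1.1 b.1.1 ∧ (a.1.2 = none ∨ a.1.2 = some b.1.1) ∧
      (b.1.2 = none ∨ b.1.2 = some a.1.1)))

/-- A net-wall: the graph obtained from the elementary `(n × n)`-wall by performing a
clique implant on every vertex of degree `3`. -/
def netWall (n : ℕ) := cliqueImplantAll (elementaryWall n n)

/-- The chordal bipartite graph `G'` of Brault-Baron, Capelli and Mengel, built from a
graph `G`: vertices `x_v` (`Sum.inl v`), `y_v` (`Sum.inr (Sum.inl v)`), and for every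
ordered adjacent pair `p = (u,v)` two vertices `q_p = (p,0)` and `t_p = (p,1)`;
`X` is complete to `Y`, and for each adjacent pair `(u,v)` there is a path
`x_u - q_{(u,v)} - t_{(u,v)} - y_v`. -/
def BCMgraph {V : Type*} (G : SimpleGraph V) :
    SimpleGraph (V ⊕ V ⊕ ({p : V × V // G.Adj p.1 p.2} × Fin 2)) :=
  SimpleGraph.fromRel (fun a b =>
    (∃ u w : V, a = Sum.inl u ∧ b = Sum.inr (Sum.inl w)) ∨
    (∃ p : {p : V × V // G.Adj p.1 p.2},
      a = Sum.inl p.1.1 ∧ b = Sum.inr (Sum.inr (p, 0))) ∨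
    (∃ p : {p : V × V // G.Adj p.1 p.2},
      a = Sum.inr (Sum.inr (p, 0)) ∧ b = Sum.inr (Sum.inr (p, 1))) ∨
    (∃ p : {p : V × V // G.Adj p.1 p.2},
      a = Sum.inr (Sum.inr (p, 1)) ∧ b = Sum.inr (Sum.inl p.1.2)))


lemma ramsey_aux : ∀ (n a b : ℕ), a + b ≤ n →
    ∃ N : ℕ, ∀ (V : Type) (A : V → V → Prop), Symmetric A →
      ∀ S : Finset V, N ≤ S.card →
        (∃ t ⊆ S, t.card = a ∧ ∀ x ∈ t, ∀ y ∈ t, x ≠ y → A x y) ∨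
        (∃ t ⊆ S, t.card = b ∧ ∀ x ∈ t, ∀ y ∈ t, x ≠ y → ¬ A x y) := by
  intro n
  induction n with
  | zero =>
    intro a b hab
    refine ⟨0, fun V A _ S _ => Or.inl ⟨∅, Finset.empty_subset _, ?_, by simp⟩⟩
    simp; omega
  | succ n ih =>
    intro a b hab
    match a, b with
    | 0, b => exact ⟨0, fun V A _ S _ => Or.inl ⟨∅, Finset.empty_subset _, by simp, by simp⟩⟩
    | a+1, 0 => exact ⟨0, fun V A _ S _ => Or.inr ⟨∅, Finset.empty_subset _, by simp, by simp⟩⟩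
    | a+1, b+1 =>
      obtain ⟨N1, h1⟩ := ih a (b+1) (by omega)
      obtain ⟨N2, h2⟩ := ih (a+1) b (by omega)
      refine ⟨N1 + N2 + 1, fun V A hA S hS => ?_⟩
      classical
      obtain ⟨v, hv⟩ : S.Nonempty := Finset.card_pos.mp (by omega)
      set S1 := (S.erase v).filter (fun x => A v x) with hS1
      set S2 := (S.erase v).filter (fun x => ¬ A v x) with hS2
      have hcard : S1.card + S2.card = S.card - 1 := by
        rw [hS1, hS2, Finset.card_filter_add_card_filter_not,
          Finset.card_erase_of_mem hv]
      have hsub1 : S1 ⊆ S := (Finset.filter_subset _ _).trans (Finset.erase_subset _ _)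
      have hsub2 : S2 ⊆ S := (Finset.filter_subset _ _).trans (Finset.erase_subset _ _)
      rcases le_or_gt N1 S1.card with hle | hlt
      · rcases h1 V A hA S1 hle with ⟨t, ht, htc, htp⟩ | ⟨t, ht, htc, htp⟩
        · left
          have hvt : v ∉ t := fun hvt =>
            Finset.notMem_erase v S (Finset.filter_subset _ _ (ht hvt))
          refine ⟨insert v t, Finset.insert_subset hv (ht.trans hsub1), ?_, ?_⟩
          · rw [Finset.card_insert_of_notMem hvt, htc]
          · intro x hx y hy hxy
            rcases Finset.mem_insert.mp hx with hx' | hx' <;>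
              rcases Finset.mem_insert.mp hy with hy' | hy'
            · exact absurd (hx'.trans hy'.symm) hxy
            · subst hx'; exact (Finset.mem_filter.mp (ht hy')).2
            · subst hy'; exact hA (Finset.mem_filter.mp (ht hx')).2
            · exact htp x hx' y hy' hxy
        · exact Or.inr ⟨t, ht.trans hsub1, htc, htp⟩
      · have hle2 : N2 ≤ S2.card := by omega
        rcases h2 V A hA S2 hle2 with ⟨t, ht, htc, htp⟩ | ⟨t, ht, htc, htp⟩
        · exact Or.inl ⟨t, ht.trans hsub2, htc, htp⟩
        · right
          have hvt : v ∉ t := fun hvt =>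
            Finset.notMem_erase v S (Finset.filter_subset _ _ (ht hvt))
          refine ⟨insert v t, Finset.insert_subset hv (ht.trans hsub2), ?_, ?_⟩
          · rw [Finset.card_insert_of_notMem hvt, htc]
          · intro x hx y hy hxy
            rcases Finset.mem_insert.mp hx with hx' | hx' <;>
              rcases Finset.mem_insert.mp hy with hy' | hy'
            · exact absurd (hx'.trans hy'.symm) hxy
            · subst hx'; exact (Finset.mem_filter.mp (ht hy')).2
            · subst hy'; exact fun h => (Finset.mem_filter.mp (ht hx')).2 (hA h)
            · exact htp x hx' y hy' hxy


lemma ramsey_set_nonempty (a b : ℕ) :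
    {N : ℕ | ∀ M : ℕ, N ≤ M → ∀ G : SimpleGraph (Fin M),
      (∃ s : Finset (Fin M), G.IsNClique a s) ∨
      (∃ s : Finset (Fin M), Gᶜ.IsNClique b s)}.Nonempty := by
  obtain ⟨N, hN⟩ := ramsey_aux (a + b) a b le_rfl
  refine ⟨N, fun M hM G => ?_⟩
  have hc : N ≤ (Finset.univ : Finset (Fin M)).card := by simpa using hM
  rcases hN (Fin M) G.Adj (fun _ _ h => h.symm) Finset.univ hc with ⟨t, _, htc, htp⟩ | ⟨t, _, htc, htp⟩
  · exact Or.inl ⟨t, ⟨fun x hx y hy hxy => htp x hx y hy hxy, htc⟩⟩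
  · refine Or.inr ⟨t, ⟨fun x hx y hy hxy => ?_, htc⟩⟩
    rw [SimpleGraph.compl_adj]
    exact ⟨hxy, htp x hx y hy hxy⟩

lemma ramsey_prop (a b : ℕ) : ∀ M : ℕ, ramsey a b ≤ M → ∀ G : SimpleGraph (Fin M),
    (∃ s : Finset (Fin M), G.IsNClique a s) ∨
    (∃ s : Finset (Fin M), Gᶜ.IsNClique b s) :=
  Nat.sInf_mem (ramsey_set_nonempty a b)

lemma ramsey_pos (a b : ℕ) (ha : 1 ≤ a) (hb : 1 ≤ b) : 1 ≤ ramsey a b := by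
  by_contra h
  have h0 : ramsey a b ≤ 0 := by omega
  rcases ramsey_prop a b 0 h0 ⊥ with ⟨s, hs⟩ | ⟨s, hs⟩
  · obtain ⟨x, -⟩ := Finset.card_pos.mp (hs.2 ▸ ha)
    exact x.elim0
  · obtain ⟨x, -⟩ := Finset.card_pos.mp (hs.2 ▸ hb)
    exact x.elim0

lemma not_hfree_of_map {V W : Type*} (G : SimpleGraph V) (H : SimpleGraph W)
    (f : W → V) (hinj : Function.Injective f)
    (h : ∀ x y, H.Adj x y ↔ G.Adj (f x) (f y)) : ¬ HFree G H := by
  intro hf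
  refine hf ⟨Set.range f, ⟨?_⟩⟩
  refine RelIso.symm ⟨Equiv.ofInjective f hinj, ?_⟩
  intro x y
  simp only [Equiv.ofInjective_apply, SimpleGraph.comap_adj, Function.Embedding.coe_subtype]
  exact (h x y).symm

lemma sP1P2_embed {V : Type*} (G : SimpleGraph V) (s : ℕ) (c d : V) (w : Fin s → V)
    (hcd : G.Adj c d) (hwinj : Function.Injective w)
    (hwc : ∀ k, w k ≠ c ∧ w k ≠ d ∧ ¬ G.Adj (w k) c ∧ ¬ G.Adj (w k) d)
    (hww : ∀ k l, k ≠ l → ¬ G.Adj (w k) (w l)) : ¬ HFree G (sP1P2graph s) := by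
  refine not_hfree_of_map G (sP1P2graph s) (Sum.elim w ![c, d]) ?_ ?_
  · rintro (k | i) (l | j) hkl
    · exact congrArg Sum.inl (hwinj hkl)
    · exfalso
      fin_cases j <;> simp at hkl
      · exact (hwc k).1 hkl
      · exact (hwc k).2.1 hkl
    · exfalso
      fin_cases i <;> simp at hkl
      · exact (hwc l).1 hkl.symm
      · exact (hwc l).2.1 hkl.symm
    · fin_cases i <;> fin_cases j <;>
        first
          | rfl
          | (exfalso; simp only [Matrix.cons_val_zero, Matrix.cons_val_one,
              Matrix.head_cons] at hkl;
             first | exact hcd.ne hkl | exact hcd.ne hkl.symm)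
  · rintro (k | i) (l | j)
    · simp only [sP1P2graph, fromRel_adj, Sum.elim_inl]
      constructor
      · rintro ⟨-, (⟨i, j, h1, -⟩ | ⟨i, j, h1, -⟩)⟩ <;> exact absurd h1 (by simp)
      · intro h
        rcases eq_or_ne k l with rfl | hne
        · exact absurd h G.irrefl
        · exact absurd h (hww k l hne)
    · simp only [sP1P2graph, fromRel_adj, Sum.elim_inl, Sum.elim_inr]
      constructor
      · rintro ⟨-, (⟨i', j', h1, -⟩ | ⟨i', j', -, h2⟩)⟩
        · exact absurd h1 (by simp)
        · exact absurd h2 (by simp)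
      · intro h
        exfalso
        fin_cases j <;> simp at h
        · exact (hwc k).2.2.1 h
        · exact (hwc k).2.2.2 h
    · simp only [sP1P2graph, fromRel_adj, Sum.elim_inl, Sum.elim_inr]
      constructor
      · rintro ⟨-, (⟨i', j', -, h2⟩ | ⟨i', j', h1, -⟩)⟩
        · exact absurd h2 (by simp)
        · exact absurd h1 (by simp)
      · intro h
        exfalso
        fin_cases i <;> simp at h
        · exact (hwc l).2.2.1 h.symm
        · exact (hwc l).2.2.2 h.symm
    · simp only [sP1P2graph, fromRel_adj, Sum.elim_inr]
      constructor
      · rintro ⟨hne, -⟩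
        have hij : i ≠ j := fun h => hne (by rw [h])
        fin_cases i <;> fin_cases j <;> simp_all
        all_goals first | exact hcd | exact hcd.symm
      · intro h
        refine ⟨?_, Or.inl ⟨i, j, rfl, rfl⟩⟩
        intro he
        have : i = j := by injection he
        subst this
        exact G.irrefl h

lemma KboxK_embed {V : Type*} (G : SimpleGraph V) (r : ℕ) (A B : Fin r → V)
    (hAinj : Function.Injective A) (hBinj : Function.Injective B)
    (hAB : ∀ i j, A i ≠ B j)
    (hAc : ∀ i j, i ≠ j → G.Adj (A i) (A j))
    (hBc : ∀ i j, i ≠ j → G.Adj (B i) (B j))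
    (hm : ∀ i, G.Adj (A i) (B i))
    (hnon : ∀ i j, i ≠ j → ¬ G.Adj (A i) (B j)) : ¬ HFree G (KboxK r) := by
  refine not_hfree_of_map G (KboxK r) (Sum.elim A B) ?_ ?_
  · rintro (i | i) (j | j) hij
    · exact congrArg Sum.inl (hAinj hij)
    · exact absurd hij (hAB i j)
    · exact absurd hij.symm (hAB j i)
    · exact congrArg Sum.inr (hBinj hij)
  · rintro (i | i) (j | j)
    · simp only [KboxK, fromRel_adj, Sum.elim_inl, ne_eq, Sum.inl.injEq]
      constructor
      · rintro ⟨hne, -⟩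
        exact hAc i j fun h => hne (by rw [h])
      · intro h
        have hij : i ≠ j := fun he => by subst he; exact G.irrefl h
        exact ⟨by simpa using hij, Or.inl (Or.inl ⟨i, j, rfl, rfl⟩)⟩
    · simp only [KboxK, fromRel_adj, Sum.elim_inl, Sum.elim_inr]
      constructor
      · rintro ⟨hne, h⟩
        have : i = j := by
          rcases h with (h' | h' | ⟨k, h1, h2⟩) | (h' | h' | ⟨k, h1, h2⟩) <;> simp_all
        subst this
        exact hm i
      · intro h
        have hij : i = j := by
          by_contra hne
          exact hnon i j hne h
        subst hij
        exact ⟨by simp, Or.inl (Or.inr (Or.inr ⟨i, rfl, rfl⟩))⟩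
    · simp only [KboxK, fromRel_adj, Sum.elim_inl, Sum.elim_inr]
      constructor
      · rintro ⟨hne, h⟩
        have : i = j := by
          rcases h with (h' | h' | ⟨k, h1, h2⟩) | (h' | h' | ⟨k, h1, h2⟩) <;> simp_all
        subst this
        exact (hm i).symm
      · intro h
        have hij : i = j := by
          by_contra hne
          exact hnon j i (fun he => hne he.symm) h.symm
        subst hij
        exact ⟨by simp, Or.inr (Or.inr (Or.inr ⟨i, rfl, rfl⟩))⟩
    · simp only [KboxK, fromRel_adj, Sum.elim_inr, ne_eq, Sum.inr.injEq]
      constructor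
      · rintro ⟨hne, -⟩
        exact hBc i j fun h => hne (by rw [h])
      · intro h
        have hij : i ≠ j := fun he => by subst he; exact G.irrefl h
        exact ⟨by simpa using hij, Or.inl (Or.inr (Or.inl ⟨i, j, rfl, rfl⟩))⟩

lemma exists_enum {α : Type*} (t : Finset α) (n : ℕ) (h : t.card = n) :
    ∃ f : Fin n → α, Function.Injective f ∧ ∀ k, f k ∈ t := by
  subst h
  refine ⟨fun k => (t.equivFin.symm k : α), ?_, fun k => (t.equivFin.symm k).2⟩
  intro k l hkl
  exact t.equivFin.symm.injective (Subtype.ext hkl)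

lemma matching_lt {V : Type*} (r s : ℕ) (G : SimpleGraph V)
    (h1 : HFree G (KboxK r)) (h2 : HFree G (sP1P2graph s)) (X : Set V)
    (M : Finset (V × V)) (hM : IsInducedCutMatching G X Xᶜ M) :
    M.card < ramsey (ramsey r (s + 1)) (s + 1) := by
  by_contra hcon
  push_neg at hcon
  obtain ⟨p, hpinj, hpmem⟩ := exists_enum M M.card rfl
  have hmem : ∀ i, (p i).1 ∈ X ∧ (p i).2 ∈ Xᶜ ∧ G.Adj (p i).1 (p i).2 :=
    fun i => hM.1 _ (hpmem i)
  have hdist : ∀ i j, i ≠ j →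
      (p i).1 ≠ (p j).1 ∧ (p i).2 ≠ (p j).2 ∧ (p i).1 ≠ (p j).2 ∧ (p i).2 ≠ (p j).1 ∧
      ¬ G.Adj (p i).1 (p j).2 ∧ ¬ G.Adj (p j).1 (p i).2 :=
    fun i j hij => hM.2 _ (hpmem i) _ (hpmem j) (fun h => hij (hpinj h))
  have habne : ∀ i j, (p i).1 ≠ (p j).2 :=
    fun i j h => (hmem j).2.1 (h ▸ (hmem i).1)
  rcases ramsey_prop (ramsey r (s + 1)) (s + 1) M.card hcon
      (SimpleGraph.fromRel (fun i j => G.Adj (p i).1 (p j).1)) with ⟨t, ht⟩ | ⟨t, ht⟩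
  · -- clique among the a-side
    have hclA : ∀ i ∈ t, ∀ j ∈ t, i ≠ j → G.Adj (p i).1 (p j).1 := by
      intro i hi j hj hij
      have h' := ht.1 (Finset.mem_coe.mpr hi) (Finset.mem_coe.mpr hj) hij
      rw [SimpleGraph.fromRel_adj] at h'
      rcases h'.2 with h' | h'
      · exact h'
      · exact h'.symm
    obtain ⟨q, hqinj, hqmem⟩ := exists_enum t _ ht.2
    rcases ramsey_prop r (s + 1) (ramsey r (s + 1)) le_rfl
        (SimpleGraph.fromRel (fun i j => G.Adj (p (q i)).2 (p (q j)).2)) with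
      ⟨u, hu⟩ | ⟨u, hu⟩
    · -- clique among the b-side : K_r box K_r
      have hclB : ∀ i ∈ u, ∀ j ∈ u, i ≠ j → G.Adj (p (q i)).2 (p (q j)).2 := by
        intro i hi j hj hij
        have h' := hu.1 (Finset.mem_coe.mpr hi) (Finset.mem_coe.mpr hj) hij
        rw [SimpleGraph.fromRel_adj] at h'
        rcases h'.2 with h' | h'
        · exact h'
        · exact h'.symm
      obtain ⟨w, hwinj, hwmem⟩ := exists_enum u r hu.2
      have heinj : Function.Injective (fun i => q (w i)) :=
        fun i j h => hwinj (hqinj h)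
      refine KboxK_embed G r (fun i => (p (q (w i))).1) (fun i => (p (q (w i))).2)
        ?_ ?_ ?_ ?_ ?_ ?_ ?_ h1
      · intro i j h
        by_contra hne
        exact (hdist _ _ (fun h' => hne (heinj h'))).1 h
      · intro i j h
        by_contra hne
        exact (hdist _ _ (fun h' => hne (heinj h'))).2.1 h
      · exact fun i j => habne _ _
      · exact fun i j hij => hclA _ (hqmem _) _ (hqmem _)
          (fun h => hij (heinj h))
      · exact fun i j hij => hclB _ (hwmem _) _ (hwmem _) (hwinj.ne hij)
      · exact fun i => (hmem _).2.2
      · exact fun i j hij => (hdist _ _ (fun h => hij (heinj h))).2.2.2.2.1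
    · -- independent set among the b-side : sP1 + P2
      have hncl : ∀ i ∈ u, ∀ j ∈ u, i ≠ j → ¬ G.Adj (p (q i)).2 (p (q j)).2 := by
        intro i hi j hj hij hadj
        have h' := hu.1 (Finset.mem_coe.mpr hi) (Finset.mem_coe.mpr hj) hij
        rw [SimpleGraph.compl_adj, SimpleGraph.fromRel_adj] at h'
        exact h'.2 ⟨hij, Or.inl hadj⟩
      obtain ⟨w, hwmemInj, hwmem⟩ := exists_enum u (s + 1) hu.2
      refine sP1P2_embed G s (p (q (w 0))).1 (p (q (w 0))).2
        (fun k => (p (q (w k.succ))).2) (hmem _).2.2 ?_ ?_ ?_ h2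
      · intro k l hkl
        have h' : w k.succ = w l.succ := by
          by_contra hne
          exact (hdist _ _ (fun h => hne (hqinj h))).2.1 hkl
        exact Fin.succ_injective _ (hwmemInj h')
      · intro k
        have hne : q (w k.succ) ≠ q (w 0) :=
          fun h => Fin.succ_ne_zero k (hwmemInj (hqinj h))
        refine ⟨fun h => habne _ _ h.symm, (hdist _ _ hne).2.1, ?_, ?_⟩
        · exact fun h => (hdist _ _ hne.symm).2.2.2.2.1 h.symm
        · exact hncl _ (hwmem _) _ (hwmem _) (fun h => Fin.succ_ne_zero k (hwmemInj h))
      · intro k l hkl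
        refine hncl _ (hwmem _) _ (hwmem _) (fun h => hkl ?_)
        exact Fin.succ_injective _ (hwmemInj h)
  · -- independent set among the a-side : sP1 + P2
    have hncl : ∀ i ∈ t, ∀ j ∈ t, i ≠ j → ¬ G.Adj (p i).1 (p j).1 := by
      intro i hi j hj hij hadj
      have h' := ht.1 (Finset.mem_coe.mpr hi) (Finset.mem_coe.mpr hj) hij
      rw [SimpleGraph.compl_adj, SimpleGraph.fromRel_adj] at h'
      exact h'.2 ⟨hij, Or.inl hadj⟩
    obtain ⟨w, hwinj, hwmem⟩ := exists_enum t (s + 1) ht.2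
    refine sP1P2_embed G s (p (w 0)).1 (p (w 0)).2
      (fun k => (p (w k.succ)).1) (hmem _).2.2 ?_ ?_ ?_ h2
    · intro k l hkl
      have h' : w k.succ = w l.succ := by
        by_contra hne
        exact (hdist _ _ hne).1 hkl
      exact Fin.succ_injective _ (hwinj h')
    · intro k
      have hne : w k.succ ≠ w 0 := fun h => Fin.succ_ne_zero k (hwinj h)
      refine ⟨(hdist _ _ hne).1, habne _ _, ?_, ?_⟩
      · exact hncl _ (hwmem _) _ (hwmem _) hne
      · exact (hdist _ _ hne).2.2.2.2.1
    · exact fun k l hkl => hncl _ (hwmem _) _ (hwmem _)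
        (fun h => hkl (Fin.succ_injective _ (hwinj h)))

/-- Let `r ≥ 1`, `s ≥ 0` and let `G` be a `(K_r ⊟ K_r, sP₁ + P₂)`-free
graph.  Then `cutmim_G(X, V(G) ∖ X) < R(R(r, s+1), s+1)` for every `X ⊆ V(G)`; in
particular `mimw(G) < R(R(r, s+1), s+1)`. -/
theorem KboxK_sP1P2_free_mimw {V : Type*} [Finite V] (r s : ℕ) (hr : 1 ≤ r)
    (G : SimpleGraph V) (h1 : HFree G (KboxK r)) (h2 : HFree G (sP1P2graph s)) :
    (∀ X : Set V, cutmim G X Xᶜ < ramsey (ramsey r (s + 1)) (s + 1)) ∧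
      mimw G < ramsey (ramsey r (s + 1)) (s + 1) := by
  have key : ∀ X : Set V, cutmim G X Xᶜ < ramsey (ramsey r (s + 1)) (s + 1) := by
    intro X
    set N2 := ramsey (ramsey r (s + 1)) (s + 1) with hN2
    have hbdd : ∀ n ∈ {n : ℕ | ∃ M : Finset (V × V),
        IsInducedCutMatching G X Xᶜ M ∧ M.card = n}, n < N2 := by
      rintro n ⟨M, hInd, rfl⟩
      exact matching_lt r s G h1 h2 X M hInd
    have h0 : (0 : ℕ) ∈ {n : ℕ | ∃ M : Finset (V × V),
        IsInducedCutMatching G X Xᶜ M ∧ M.card = n} :=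
      ⟨∅, ⟨fun p hp => absurd hp (Finset.notMem_empty p),
        fun p hp => absurd hp (Finset.notMem_empty p)⟩, Finset.card_empty⟩
    have hmem := Nat.sSup_mem ⟨0, h0⟩ ⟨N2, fun n hn => (hbdd n hn).le⟩
    exact hbdd _ hmem
  have hN2pos : 1 ≤ ramsey (ramsey r (s + 1)) (s + 1) :=
    ramsey_pos _ _ (ramsey_pos r (s + 1) hr (by omega)) (by omega)
  refine ⟨key, ?_⟩
  rcases Set.eq_empty_or_nonempty {n : ℕ | ∃ B : BranchDecomp G, B.width = n} with he | hne
  · unfold mimw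
    rw [he, Nat.sInf_empty]
    omega
  · obtain ⟨B, hB⟩ := Nat.sInf_mem hne
    unfold mimw
    rw [← hB]
    have hbdd' : ∀ n ∈ {n : ℕ | ∃ a b : B.L, B.T.Adj a b ∧
        n = cutmim G (B.side a b) (B.side a b)ᶜ}, n < ramsey (ramsey r (s + 1)) (s + 1) := by
      rintro n ⟨a, b, hab, rfl⟩
      exact key (B.side a b)
    rcases Set.eq_empty_or_nonempty {n : ℕ | ∃ a b : B.L, B.T.Adj a b ∧
        n = cutmim G (B.side a b) (B.side a b)ᶜ} with h' | h'
    · unfold BranchDecomp.width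
      rw [h']
      exact lt_of_lt_of_le (by simp) hN2pos
    · exact hbdd' _ (Nat.sSup_mem h'
        ⟨ramsey (ramsey r (s + 1)) (s + 1), fun n hn => (hbdd' n hn).le⟩)
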